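/- Let (Y,τ) be a Hausdorff space and let f : (ℕ → ℕ, σ_𝕊) → (Y,τ) be a continuous open surjection. For each finite sequence a of natural numbers set V(a) := f[S(a)], the image of S(a) under f. Then the Souslin scheme V = ⟨V(a)⟩ is a Sorgenfrey base for (Y,τ). -/

import Mathlib

open Set Filter Topology TopologicalSpace Function

noncomputable section

/-- The Sorgenfrey topology on `ℝ`: generated by half-open intervals `[a, b)`. -/
def sorgenfreyTop : TopologicalSpace ℝ :=
  TopologicalSpace.generateFrom {s : Set ℝ | ∃ a b : ℝ, s = Set.Ico a b}

/-- The initial segment `p↾n` of an infinite sequence, as a list. -/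
def restr (p : ℕ → ℕ) (n : ℕ) : List ℕ := (List.range n).map p

/-- `fruit V p = ⋂ n, V (p↾n)`. -/
def fruit {X : Type*} (V : List ℕ → Set X) (p : ℕ → ℕ) : Set X := ⋂ n, V (restr p n)

/-- A Souslin scheme is covering if `V ⟨⟩ = X` and `V a = ⋃ n, V (a ⌢ n)`. -/
def Covering {X : Type*} (V : List ℕ → Set X) : Prop :=
  V [] = Set.univ ∧ ∀ a : List ℕ, V a = ⋃ n : ℕ, V (a ++ [n])

/-- A Souslin scheme is complete if every fruit is nonempty. -/
def CompleteScheme {X : Type*} (V : List ℕ → Set X) : Prop :=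
  ∀ q : ℕ → ℕ, (fruit V q).Nonempty

/-- A Souslin scheme has strict branches if every fruit is a singleton. -/
def StrictBranches {X : Type*} (V : List ℕ → Set X) : Prop :=
  ∀ q : ℕ → ℕ, ∃ x : X, fruit V q = {x}

/-- A Souslin scheme is locally strict. -/
def LocallyStrict {X : Type*} (V : List ℕ → Set X) : Prop :=
  (∀ a : List ℕ, V a = ⋃ n : ℕ, V (a ++ [n])) ∧
  ∀ a : List ℕ, ∀ m k : ℕ, m ≠ k → V (a ++ [m]) ∩ V (a ++ [k]) = ∅

/-- `q ◁ p` for infinite sequences: `q↾n = p↾n` and `q n < p n` for some `n`. -/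
def tri (q p : ℕ → ℕ) : Prop := ∃ n : ℕ, restr q n = restr p n ∧ q n < p n

/-- `q ⊴ p` for infinite sequences. -/
def trieq (q p : ℕ → ℕ) : Prop := tri q p ∨ q = p

/-- `q ◁ s` where `q` is an infinite sequence and `s` a finite one. -/
def triL (q : ℕ → ℕ) (s : List ℕ) : Prop :=
  ∃ n : ℕ, ∃ h : n < s.length, restr q n = s.take n ∧ q n < s.get ⟨n, h⟩

/-- `rsequences(q, n) = {p | q ◁ p ∧ q↾n = p↾n}`. -/
def rsequences (q : ℕ → ℕ) (n : ℕ) : Set (ℕ → ℕ) :=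
  {p | tri q p ∧ restr q n = restr p n}

/-- `rsubtree(q, n)`: finite sequences `s` such that `q↾n ⊏ s` and `q ◁ s`. -/
def rsubtree (q : ℕ → ℕ) (n : ℕ) : Set (List ℕ) :=
  {s | restr q n <+: s ∧ restr q n ≠ s ∧ triL q s}

/-- `cut(V, q, n) = ⋃ {fruit(V, p) : p ∈ rsequences(q, n)}`. -/
def cut {X : Type*} (V : List ℕ → Set X) (q : ℕ → ℕ) (n : ℕ) : Set X :=
  ⋃ p ∈ rsequences q n, fruit V p

/-- `branches(V, x) = {q | x ∈ fruit(V, q)}`. -/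
def branches {X : Type*} (V : List ℕ → Set X) (x : X) : Set (ℕ → ℕ) :=
  {q | x ∈ fruit V q}

/-- `q` is a `τ`-base branch of `x` in `V`: `q ∈ branches(V, x)` and
`{cut(V, q, m) ∪ {x} : m ∈ ℕ}` is a neighborhood base of open sets at `x`. -/
def IsBaseBranch {X : Type*} (τ : TopologicalSpace X) (V : List ℕ → Set X)
    (q : ℕ → ℕ) (x : X) : Prop :=
  x ∈ fruit V q ∧ (∀ m : ℕ, IsOpen[τ] (cut V q m ∪ {x})) ∧
    (@nhds X τ x).HasBasis (fun _ : ℕ => True) (fun m : ℕ => cut V q m ∪ {x})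

/-- `BB(V, x, τ)`: the set of `τ`-base branches of `x` in `V`. -/
def BB {X : Type*} (τ : TopologicalSpace X) (V : List ℕ → Set X) (x : X) : Set (ℕ → ℕ) :=
  {q | IsBaseBranch τ V q x}

/-- A Sorgenfrey base for a space: an open complete covering Souslin scheme
satisfying (S1) and (S2). -/
def IsSorgenfreyBase {X : Type*} (τ : TopologicalSpace X) (V : List ℕ → Set X) : Prop :=
  (∀ a : List ℕ, IsOpen[τ] (V a)) ∧ CompleteScheme V ∧ Covering V ∧
  (∀ x : X, ∀ q ∈ branches V x, ∀ n : ℕ, ∃ t ∈ BB τ V x, restr t n = restr q n) ∧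
  (∀ q : ℕ → ℕ, ∃ z : X, q ∈ BB τ V z)

/-- The Souslin scheme `S` on the Baire set: `S a = {p | a ⊑ p}`. -/
def SchemeS (a : List ℕ) : Set (ℕ → ℕ) := {p | restr p a.length = a}

/-- The topology `σ_𝕊` on `ℕ → ℕ` generated by the base
`{cut(S, p, n) ∪ {p} : p ∈ ℕ → ℕ, n ∈ ℕ}`. -/
def sigmaS : TopologicalSpace (ℕ → ℕ) :=
  TopologicalSpace.generateFrom
    {U : Set (ℕ → ℕ) | ∃ p : ℕ → ℕ, ∃ n : ℕ, U = cut SchemeS p n ∪ {p}}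

lemma restr_length (p : ℕ → ℕ) (n : ℕ) : (restr p n).length = n := by simp [restr]

lemma restr_eq_iff {p r : ℕ → ℕ} {n : ℕ} : restr p n = restr r n ↔ ∀ i < n, p i = r i := by
  simp [restr, List.map_eq_map_iff]

lemma restr_mono {p r : ℕ → ℕ} {m n : ℕ} (hm : m ≤ n) (h : restr p n = restr r n) :
    restr p m = restr r m :=
  restr_eq_iff.2 fun i hi => restr_eq_iff.1 h i (hi.trans_le hm)

lemma restr_succ (p : ℕ → ℕ) (n : ℕ) : restr p (n + 1) = restr p n ++ [p n] := by
  simp [restr, List.range_succ]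

lemma mem_SchemeS_restr (p : ℕ → ℕ) (n : ℕ) : p ∈ SchemeS (restr p n) := by
  show restr p (restr p n).length = restr p n
  rw [restr_length]

lemma mem_SchemeS_iff {r p : ℕ → ℕ} {n : ℕ} : r ∈ SchemeS (restr p n) ↔ restr r n = restr p n := by
  show restr r (restr p n).length = restr p n ↔ _
  rw [restr_length]

lemma fruit_S (p : ℕ → ℕ) : fruit SchemeS p = {p} := by
  ext x
  simp only [fruit, Set.mem_iInter, Set.mem_singleton_iff]
  constructor
  · intro h
    funext i
    exact restr_eq_iff.1 (mem_SchemeS_iff.1 (h (i + 1))) i (Nat.lt_succ_self i)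
  · rintro rfl
    exact fun n => mem_SchemeS_restr _ n

lemma cut_S (q : ℕ → ℕ) (n : ℕ) : cut SchemeS q n = rsequences q n := by
  simp [cut, fruit_S]

lemma tri_witness {q p : ℕ → ℕ} {m : ℕ} (h : tri q p) (he : restr q m = restr p m) :
    ∃ j, m ≤ j ∧ restr q j = restr p j ∧ q j < p j := by
  obtain ⟨j, hj1, hj2⟩ := h
  refine ⟨j, ?_, hj1, hj2⟩
  by_contra hlt
  exact absurd (restr_eq_iff.1 he j (lt_of_not_ge hlt)) (by simpa using hj2.ne)

lemma rsequences_anti {q : ℕ → ℕ} {m n : ℕ} (h : m ≤ n) : rsequences q n ⊆ rsequences q m :=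
  fun p hp => ⟨hp.1, restr_mono h hp.2⟩

lemma basic_shrink {p p' : ℕ → ℕ} {n' : ℕ} (hp : p ∈ cut SchemeS p' n' ∪ {p'}) :
    ∃ n, cut SchemeS p n ∪ {p} ⊆ cut SchemeS p' n' ∪ {p'} := by
  rw [cut_S] at hp ⊢
  rcases hp with hp | hp
  · obtain ⟨htri, he⟩ := hp
    obtain ⟨j, hj, hje, hjlt⟩ := tri_witness htri he
    refine ⟨j + 1, ?_⟩
    rintro r (hr | rfl)
    · rw [cut_S] at hr
      obtain ⟨htr, her⟩ := hr
      refine Or.inl ⟨⟨j, ?_, ?_⟩, ?_⟩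
      · exact hje.trans (restr_mono (Nat.le_succ j) her)
      · rw [← restr_eq_iff.1 her j (Nat.lt_succ_self j)]; exact hjlt
      · exact he.trans (restr_mono (hj.trans (Nat.le_succ j)) her)
    · exact Or.inl ⟨htri, he⟩
  · rcases hp with rfl
    exact ⟨n', by rw [cut_S]⟩

lemma basisS : @TopologicalSpace.IsTopologicalBasis (ℕ → ℕ) sigmaS
    {U : Set (ℕ → ℕ) | ∃ p : ℕ → ℕ, ∃ n : ℕ, U = cut SchemeS p n ∪ {p}} := by
  letI : TopologicalSpace (ℕ → ℕ) := sigmaS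
  refine ⟨?_, ?_, rfl⟩
  · rintro t₁ ⟨p₁, n₁, rfl⟩ t₂ ⟨p₂, n₂, rfl⟩ x ⟨hx₁, hx₂⟩
    obtain ⟨m₁, hm₁⟩ := basic_shrink hx₁
    obtain ⟨m₂, hm₂⟩ := basic_shrink hx₂
    refine ⟨cut SchemeS x (max m₁ m₂) ∪ {x}, ⟨x, max m₁ m₂, rfl⟩, Or.inr rfl, ?_⟩
    have hsub : ∀ k, k ≤ max m₁ m₂ →
        cut SchemeS x (max m₁ m₂) ∪ {x} ⊆ cut SchemeS x k ∪ {x} := by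
      intro k hk r' hr'
      rcases hr' with hr' | hr'
      · rw [cut_S] at hr' ⊢; exact Or.inl (rsequences_anti hk hr')
      · exact Or.inr hr'
    intro r hr
    exact ⟨hm₁ (hsub m₁ (le_max_left _ _) hr), hm₂ (hsub m₂ (le_max_right _ _) hr)⟩
  · apply Set.eq_univ_of_forall
    intro p
    exact ⟨cut SchemeS p 0 ∪ {p}, ⟨p, 0, rfl⟩, Or.inr rfl⟩

lemma exists_basic_nhd {U : Set (ℕ → ℕ)} (hU : IsOpen[sigmaS] U) {p : ℕ → ℕ} (hp : p ∈ U) :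
    ∃ n, cut SchemeS p n ∪ {p} ⊆ U := by
  letI : TopologicalSpace (ℕ → ℕ) := sigmaS
  obtain ⟨v, ⟨p', n', rfl⟩, hpv, hvU⟩ := basisS.exists_subset_of_mem_open hp hU
  obtain ⟨n, hn⟩ := basic_shrink hpv
  exact ⟨n, hn.trans hvU⟩

lemma SchemeS_open (a : List ℕ) : IsOpen[sigmaS] (SchemeS a) := by
  letI : TopologicalSpace (ℕ → ℕ) := sigmaS
  have heq : SchemeS a = ⋃ p ∈ SchemeS a, (cut SchemeS p a.length ∪ {p}) := by
    ext r
    simp only [Set.mem_iUnion]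
    constructor
    · intro hr; exact ⟨r, hr, Or.inr rfl⟩
    · rintro ⟨p, hp, (hr | rfl)⟩
      · rw [cut_S] at hr
        show restr r a.length = a
        rw [← hr.2]; exact hp
      · exact hp
  rw [heq]
  exact isOpen_biUnion fun p _ => basisS.isOpen ⟨p, a.length, rfl⟩

lemma cut_image {Y : Type*} (f : (ℕ → ℕ) → Y) (q : ℕ → ℕ) (m : ℕ) :
    cut (fun a => f '' SchemeS a) q m = f '' rsequences q m := by
  apply Set.Subset.antisymm
  · intro y hy
    simp only [cut, Set.mem_iUnion] at hy
    obtain ⟨p, hp, hyp⟩ := hy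
    obtain ⟨htri, hem⟩ := hp
    obtain ⟨j, hjm, hje, hjlt⟩ := tri_witness htri hem
    have hyN : y ∈ f '' SchemeS (restr p (j + 1)) := Set.mem_iInter.1 hyp (j + 1)
    obtain ⟨r, hrS, hry⟩ := hyN
    have hrN : restr r (j + 1) = restr p (j + 1) := mem_SchemeS_iff.1 hrS
    refine ⟨r, ⟨⟨j, ?_, ?_⟩, ?_⟩, hry⟩
    · exact hje.trans (restr_mono (Nat.le_succ j) hrN).symm
    · rw [(restr_eq_iff.1 hrN j (Nat.lt_succ_self j) : r j = p j)]; exact hjlt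
    · exact hem.trans (restr_mono (hjm.trans (Nat.le_succ j)) hrN).symm
  · rintro y ⟨p, hp, rfl⟩
    simp only [cut, Set.mem_iUnion]
    exact ⟨p, hp, Set.mem_iInter.2 fun n => ⟨p, mem_SchemeS_restr p n, rfl⟩⟩

lemma cut_union_image {Y : Type*} (f : (ℕ → ℕ) → Y) (q : ℕ → ℕ) (m : ℕ) :
    cut (fun a => f '' SchemeS a) q m ∪ {f q} = f '' (cut SchemeS q m ∪ {q}) := by
  rw [Set.image_union, Set.image_singleton, cut_S, cut_image]

lemma SchemeS_split (a : List ℕ) : SchemeS a = ⋃ n, SchemeS (a ++ [n]) := by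
  ext p
  simp only [Set.mem_iUnion, SchemeS, Set.mem_setOf_eq]
  constructor
  · intro h
    refine ⟨p a.length, ?_⟩
    rw [List.length_append, List.length_singleton, restr_succ, h]
  · rintro ⟨n, h⟩
    rw [List.length_append, List.length_singleton, restr_succ] at h
    have := congrArg (List.take a.length) h
    rwa [List.take_left, List.take_left' (restr_length p a.length)] at this

lemma basic_open (q : ℕ → ℕ) (m : ℕ) : IsOpen[sigmaS] (cut SchemeS q m ∪ {q}) := by
  letI : TopologicalSpace (ℕ → ℕ) := sigmaS
  exact basisS.isOpen ⟨q, m, rfl⟩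

/-- If `f : (ℕ → ℕ, σ_𝕊) → (Y, τ)` is a continuous open surjection onto a Hausdorff
space, then `⟨f[S a]⟩ₐ` is a Sorgenfrey base for `(Y, τ)`. -/
theorem stmt3 {Y : Type*} (τ : TopologicalSpace Y) (hT2 : @T2Space Y τ)
    (f : (ℕ → ℕ) → Y) (hc : @Continuous (ℕ → ℕ) Y sigmaS τ f)
    (ho : @IsOpenMap (ℕ → ℕ) Y sigmaS τ f) (hs : Function.Surjective f) :
    IsSorgenfreyBase τ (fun a : List ℕ => f '' SchemeS a) := by
  letI : TopologicalSpace Y := τ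
  have hfruit : ∀ q : ℕ → ℕ, f q ∈ fruit (fun a => f '' SchemeS a) q :=
    fun q => Set.mem_iInter.2 fun n => ⟨q, mem_SchemeS_restr q n, rfl⟩
  have hopen : ∀ (q : ℕ → ℕ) (m : ℕ),
      IsOpen[τ] (cut (fun a => f '' SchemeS a) q m ∪ {f q}) := by
    intro q m
    rw [cut_union_image]
    exact ho _ (basic_open q m)
  have hBB : ∀ q : ℕ → ℕ, q ∈ BB τ (fun a => f '' SchemeS a) (f q) := by
    intro q
    refine ⟨hfruit q, hopen q, ?_⟩
    refine ⟨fun t => ⟨?_, ?_⟩⟩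
    · intro ht
      obtain ⟨u, hut, huo, hxu⟩ := mem_nhds_iff.1 ht
      obtain ⟨n, hn⟩ := exists_basic_nhd (@Continuous.isOpen_preimage _ _ sigmaS τ f hc u huo) (hxu : f q ∈ u)
      refine ⟨n, trivial, ?_⟩
      rw [cut_union_image]
      exact ((Set.image_mono hn).trans (Set.image_preimage_subset f u)).trans hut
    · rintro ⟨i, -, hsub⟩
      exact mem_of_superset ((hopen q i).mem_nhds (Or.inr rfl)) hsub
  refine ⟨fun a => ho _ (SchemeS_open a), fun q => ⟨f q, hfruit q⟩, ⟨?_, ?_⟩, ?_,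
    fun q => ⟨f q, hBB q⟩⟩
  · have h0 : SchemeS [] = Set.univ := by
      ext p; simp [SchemeS, restr]
    show f '' SchemeS [] = Set.univ
    rw [h0, Set.image_univ]
    exact hs.range_eq
  · intro a
    show f '' SchemeS a = ⋃ n, f '' SchemeS (a ++ [n])
    rw [SchemeS_split a, Set.image_iUnion]
  · intro x q hq n
    obtain ⟨t, htS, hft⟩ := Set.mem_iInter.1 hq n
    exact ⟨t, hft ▸ hBB t, mem_SchemeS_iff.1 htS⟩
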